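/- Let X and Y be random variables on a finite probability space with joint pmf p(x,y), marginals p(x), and conditionals p(y|x). For any c > 0, the t-entropies satisfy the subadditivity property H_c(X,Y) ≤ H_c(X) + H_c(Y|X). -/
import Mathlib


open Real

/-- Joint t-entropy of a joint pmf `p : Fin n → Fin m → ℝ`. -/
noncomputable def tEntropyJoint {n m : ℕ} (c : ℝ) (p : Fin n → Fin m → ℝ) : ℝ :=
  (∑ i, ∑ j, p i j * Real.arctan ((p i j) ^ (-c))) - Real.pi / 4

/-- t-entropy of the first marginal of a joint pmf. -/
noncomputable def tEntropyMargX {n m : ℕ} (c : ℝ) (p : Fin n → Fin m → ℝ) : ℝ :=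
  (∑ i, (∑ j, p i j) * Real.arctan ((∑ j, p i j) ^ (-c))) - Real.pi / 4

/-- Conditional t-entropy `H_c(Y | X)` of a joint pmf, with `p(y|x) = p(x,y)/p(x)`
(zero-probability terms contributing 0). -/
noncomputable def tEntropyCondYX {n m : ℕ} (c : ℝ) (p : Fin n → Fin m → ℝ) : ℝ :=
  (∑ i, ∑ j, p i j * Real.arctan ((p i j / ∑ j', p i j') ^ (-c))) - Real.pi / 4

lemma arctan_key {u v : ℝ} (hu0 : 0 < u) (hu1 : u ≤ 1) (hv0 : 0 < v) (hv1 : v ≤ 1) :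
    Real.arctan u + Real.arctan v ≤ Real.pi / 4 + Real.arctan (u * v) := by
  rcases lt_or_eq_of_le (mul_le_one₀ hu1 hv0.le hv1) with h | h
  · have h1 : (1 : ℝ) * (u * v) < 1 := by linarith
    rw [Real.arctan_add h, show Real.pi / 4 = Real.arctan 1 from Real.arctan_one.symm,
      Real.arctan_add h1, one_mul]
    apply Real.arctan_strictMono.monotone
    have hden : 0 < 1 - u * v := by linarith
    rw [div_le_div_iff₀ hden hden]
    have h2 : u + v ≤ 1 + u * v := by
      nlinarith [mul_nonneg (sub_nonneg.mpr hu1) (sub_nonneg.mpr hv1)]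
    nlinarith
  · have hu : u = 1 := by nlinarith
    have hv : v = 1 := by nlinarith
    simp [hu, hv, Real.arctan_one]

lemma pointwise_key {a s c : ℝ} (hc : 0 < c) (ha : 0 < a) (has : a ≤ s) (hs1 : s ≤ 1) :
    Real.arctan (a ^ (-c)) + Real.pi / 4
      ≤ Real.arctan (s ^ (-c)) + Real.arctan ((a / s) ^ (-c)) := by
  have hs : 0 < s := lt_of_lt_of_le ha has
  set u : ℝ := s ^ c with hu
  set v : ℝ := (a / s) ^ c with hv
  have hu0 : 0 < u := Real.rpow_pos_of_pos hs c
  have hv0 : 0 < v := Real.rpow_pos_of_pos (div_pos ha hs) c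
  have hu1 : u ≤ 1 := Real.rpow_le_one hs.le hs1 hc.le
  have hv1 : v ≤ 1 := Real.rpow_le_one (div_pos ha hs).le
    ((div_le_one hs).mpr has) hc.le
  have huv : u * v = a ^ c := by
    rw [hu, hv, ← Real.mul_rpow hs.le (div_pos ha hs).le,
      mul_div_cancel₀ _ (ne_of_gt hs)]
  have h1 : Real.arctan (a ^ (-c)) = Real.pi / 2 - Real.arctan (u * v) := by
    rw [huv, ← Real.arctan_inv_of_pos (Real.rpow_pos_of_pos ha c),
      ← Real.rpow_neg ha.le]
  have h2 : Real.arctan (s ^ (-c)) = Real.pi / 2 - Real.arctan u := by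
    rw [hu, ← Real.arctan_inv_of_pos (Real.rpow_pos_of_pos hs c),
      ← Real.rpow_neg hs.le]
  have h3 : Real.arctan ((a / s) ^ (-c)) = Real.pi / 2 - Real.arctan v := by
    rw [hv, ← Real.arctan_inv_of_pos (Real.rpow_pos_of_pos (div_pos ha hs) c),
      ← Real.rpow_neg (div_pos ha hs).le]
  rw [h1, h2, h3]
  have := arctan_key hu0 hu1 hv0 hv1
  linarith

theorem tEntropy_subadditive {n m : ℕ} (c : ℝ) (hc : 0 < c)
    (p : Fin n → Fin m → ℝ) (hp : ∀ i j, 0 ≤ p i j)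
    (hsum : ∑ i, ∑ j, p i j = 1) :
    tEntropyJoint c p ≤ tEntropyMargX c p + tEntropyCondYX c p := by
  unfold tEntropyJoint tEntropyMargX tEntropyCondYX
  have hmarg : ∀ i : Fin n,
      (∑ j, p i j) * Real.arctan ((∑ j', p i j') ^ (-c))
        = ∑ j, p i j * Real.arctan ((∑ j', p i j') ^ (-c)) := by
    intro i; rw [Finset.sum_mul]
  have key : ∑ i, ∑ j, (p i j * Real.arctan ((p i j) ^ (-c)) + p i j * (Real.pi / 4))
      ≤ ∑ i, ∑ j, (p i j * Real.arctan ((∑ j', p i j') ^ (-c))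
          + p i j * Real.arctan ((p i j / ∑ j', p i j') ^ (-c))) := by
    apply Finset.sum_le_sum
    intro i _
    apply Finset.sum_le_sum
    intro j _
    rcases eq_or_lt_of_le (hp i j) with h0 | h0
    · simp [← h0]
    · have hs : p i j ≤ ∑ j', p i j' :=
        Finset.single_le_sum (fun j' _ => hp i j') (Finset.mem_univ j)
      have hs1 : (∑ j', p i j') ≤ 1 := by
        rw [← hsum]
        exact Finset.single_le_sum
          (fun i' _ => Finset.sum_nonneg fun j' _ => hp i' j') (Finset.mem_univ i)
      have := pointwise_key hc h0 hs hs1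
      nlinarith [this, h0]
  have e1 : ∑ i, ∑ j, p i j * (Real.pi / 4) = Real.pi / 4 := by
    have : ∑ i, ∑ j, p i j * (Real.pi / 4) = (∑ i, ∑ j, p i j) * (Real.pi / 4) := by
      rw [Finset.sum_mul]
      congr 1; ext i; rw [Finset.sum_mul]
    rw [this, hsum, one_mul]
  simp only [Finset.sum_add_distrib] at key
  rw [e1] at key
  simp only [hmarg]
  linarith
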